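/- The quasi-shuffle product on K⟨A⟩ is associative: for all words u, v, w, (u * v) * w = u * (v * w). -/

import Mathlib

/-- The bilinear extension of a word-indexed product `m` to `K⟨A⟩ = List A →₀ K`. -/
noncomputable def mExt {A : Type} {K : Type} [Field K]
    (m : List A → List A → (List A →₀ K)) (x y : List A →₀ K) : List A →₀ K :=
  x.sum fun u c => y.sum fun v d => (c * d) • m u v

section QSAux
variable {A : Type} {K : Type} [Field K]
variable (m : List A → List A → (List A →₀ K)) (br : A → A → A)

lemma mExt_single_single (u v : List A) (c d : K) :
    mExt m (Finsupp.single u c) (Finsupp.single v d) = (c * d) • m u v := by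
  unfold mExt
  rw [Finsupp.sum_single_index (by simp), Finsupp.sum_single_index (by simp)]

lemma mExt_zero_left (y : List A →₀ K) : mExt m 0 y = 0 := by simp [mExt]

lemma mExt_add_left (x y z : List A →₀ K) :
    mExt m (x + y) z = mExt m x z + mExt m y z := by
  unfold mExt
  exact Finsupp.sum_add_index' (by simp) (by intros; simp [add_mul, add_smul, Finsupp.sum_add])

lemma mExt_add_right (x y z : List A →₀ K) :
    mExt m x (y + z) = mExt m x y + mExt m x z := by
  unfold mExt
  rw [← Finsupp.sum_add]
  congr 1
  funext u c
  exact Finsupp.sum_add_index' (by simp) (by intros; simp [mul_add, add_smul])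

lemma mExt_nil_right (hm_right_unit : ∀ u, m u [] = Finsupp.single u 1) (x : List A →₀ K) :
    mExt m x (Finsupp.single ([] : List A) 1) = x := by
  unfold mExt
  have h : ∀ (u : List A) (c : K),
      ((Finsupp.single ([] : List A) (1 : K)).sum fun v d => (c * d) • m u v)
        = Finsupp.single u c := by
    intro u c
    rw [Finsupp.sum_single_index (by simp)]
    simp [hm_right_unit, Finsupp.smul_single]
  simp_rw [h]
  exact Finsupp.sum_single x

lemma mExt_nil_left (hm_left_unit : ∀ v, m [] v = Finsupp.single v 1) (x : List A →₀ K) :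
    mExt m (Finsupp.single ([] : List A) 1) x = x := by
  unfold mExt
  rw [Finsupp.sum_single_index (by simp)]
  simp_rw [one_mul]
  have h : ∀ (v : List A) (d : K), d • m [] v = Finsupp.single v d := by
    intro v d; simp [hm_left_unit, Finsupp.smul_single]
  simp_rw [h]
  exact Finsupp.sum_single x

lemma qsLemA
    (hm_rec : ∀ u v a b, m (u ++ [a]) (v ++ [b]) =
        Finsupp.mapDomain (· ++ [a]) (m u (v ++ [b]))
        + Finsupp.mapDomain (· ++ [b]) (m (u ++ [a]) v)
        + Finsupp.mapDomain (· ++ [br a b]) (m u v))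
    (x : List A →₀ K) (a c : A) (w : List A) :
    mExt m (Finsupp.mapDomain (· ++ [a]) x) (Finsupp.single (w ++ [c]) 1)
      = Finsupp.mapDomain (· ++ [a]) (mExt m x (Finsupp.single (w ++ [c]) 1))
      + Finsupp.mapDomain (· ++ [c])
          (mExt m (Finsupp.mapDomain (· ++ [a]) x) (Finsupp.single w 1))
      + Finsupp.mapDomain (· ++ [br a c]) (mExt m x (Finsupp.single w 1)) := by
  induction x using Finsupp.induction_linear with
  | zero => simp [mExt_zero_left]
  | add f g hf hg =>
      simp only [Finsupp.mapDomain_add, mExt_add_left, hf, hg]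
      abel
  | single t d =>
      rw [Finsupp.mapDomain_single]
      rw [mExt_single_single, mExt_single_single, mExt_single_single, mExt_single_single]
      rw [hm_rec t w a c]
      simp [smul_add, Finsupp.mapDomain_smul]

lemma qsLemB
    (hm_rec : ∀ u v a b, m (u ++ [a]) (v ++ [b]) =
        Finsupp.mapDomain (· ++ [a]) (m u (v ++ [b]))
        + Finsupp.mapDomain (· ++ [b]) (m (u ++ [a]) v)
        + Finsupp.mapDomain (· ++ [br a b]) (m u v))
    (y : List A →₀ K) (a c : A) (u : List A) :
    mExt m (Finsupp.single (u ++ [a]) 1) (Finsupp.mapDomain (· ++ [c]) y)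
      = Finsupp.mapDomain (· ++ [a])
          (mExt m (Finsupp.single u 1) (Finsupp.mapDomain (· ++ [c]) y))
      + Finsupp.mapDomain (· ++ [c]) (mExt m (Finsupp.single (u ++ [a]) 1) y)
      + Finsupp.mapDomain (· ++ [br a c]) (mExt m (Finsupp.single u 1) y) := by
  induction y using Finsupp.induction_linear with
  | zero => simp [mExt, Finsupp.sum_single_index]
  | add f g hf hg =>
      simp only [Finsupp.mapDomain_add, mExt_add_right, hf, hg]
      abel
  | single t d =>
      rw [Finsupp.mapDomain_single]
      rw [mExt_single_single, mExt_single_single, mExt_single_single, mExt_single_single]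
      rw [hm_rec u t a c]
      simp [smul_add, Finsupp.mapDomain_smul]

lemma qsL7
    (hm_rec : ∀ u v a b, m (u ++ [a]) (v ++ [b]) =
        Finsupp.mapDomain (· ++ [a]) (m u (v ++ [b]))
        + Finsupp.mapDomain (· ++ [b]) (m (u ++ [a]) v)
        + Finsupp.mapDomain (· ++ [br a b]) (m u v))
    (u v w : List A) (a b c : A) :
    mExt m (m (u ++ [a]) (v ++ [b])) (Finsupp.single (w ++ [c]) 1)
      = Finsupp.mapDomain (· ++ [a]) (mExt m (m u (v ++ [b])) (Finsupp.single (w ++ [c]) 1))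
      + Finsupp.mapDomain (· ++ [b]) (mExt m (m (u ++ [a]) v) (Finsupp.single (w ++ [c]) 1))
      + Finsupp.mapDomain (· ++ [br a b]) (mExt m (m u v) (Finsupp.single (w ++ [c]) 1))
      + Finsupp.mapDomain (· ++ [c]) (mExt m (m (u ++ [a]) (v ++ [b])) (Finsupp.single w 1))
      + Finsupp.mapDomain (· ++ [br a c]) (mExt m (m u (v ++ [b])) (Finsupp.single w 1))
      + Finsupp.mapDomain (· ++ [br b c]) (mExt m (m (u ++ [a]) v) (Finsupp.single w 1))
      + Finsupp.mapDomain (· ++ [br (br a b) c]) (mExt m (m u v) (Finsupp.single w 1)) := by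
  conv_lhs => rw [hm_rec u v a b]
  rw [mExt_add_left m, mExt_add_left m]
  rw [qsLemA m br hm_rec (m u (v ++ [b])) a c w,
      qsLemA m br hm_rec (m (u ++ [a]) v) b c w,
      qsLemA m br hm_rec (m u v) (br a b) c w]
  have key : Finsupp.mapDomain (· ++ [c])
        (mExt m (Finsupp.mapDomain (· ++ [a]) (m u (v ++ [b]))) (Finsupp.single w 1))
      + Finsupp.mapDomain (· ++ [c])
        (mExt m (Finsupp.mapDomain (· ++ [b]) (m (u ++ [a]) v)) (Finsupp.single w 1))
      + Finsupp.mapDomain (· ++ [c])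
        (mExt m (Finsupp.mapDomain (· ++ [br a b]) (m u v)) (Finsupp.single w 1))
      = Finsupp.mapDomain (· ++ [c]) (mExt m (m (u ++ [a]) (v ++ [b])) (Finsupp.single w 1)) := by
    rw [← Finsupp.mapDomain_add, ← Finsupp.mapDomain_add,
        ← mExt_add_left m, ← mExt_add_left m, ← hm_rec u v a b]
  rw [← key]
  abel

lemma qsR7
    (hm_rec : ∀ u v a b, m (u ++ [a]) (v ++ [b]) =
        Finsupp.mapDomain (· ++ [a]) (m u (v ++ [b]))
        + Finsupp.mapDomain (· ++ [b]) (m (u ++ [a]) v)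
        + Finsupp.mapDomain (· ++ [br a b]) (m u v))
    (u v w : List A) (a b c : A) :
    mExt m (Finsupp.single (u ++ [a]) 1) (m (v ++ [b]) (w ++ [c]))
      = Finsupp.mapDomain (· ++ [a]) (mExt m (Finsupp.single u 1) (m (v ++ [b]) (w ++ [c])))
      + Finsupp.mapDomain (· ++ [b]) (mExt m (Finsupp.single (u ++ [a]) 1) (m v (w ++ [c])))
      + Finsupp.mapDomain (· ++ [c]) (mExt m (Finsupp.single (u ++ [a]) 1) (m (v ++ [b]) w))
      + Finsupp.mapDomain (· ++ [br a b]) (mExt m (Finsupp.single u 1) (m v (w ++ [c])))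
      + Finsupp.mapDomain (· ++ [br a c]) (mExt m (Finsupp.single u 1) (m (v ++ [b]) w))
      + Finsupp.mapDomain (· ++ [br b c]) (mExt m (Finsupp.single (u ++ [a]) 1) (m v w))
      + Finsupp.mapDomain (· ++ [br a (br b c)]) (mExt m (Finsupp.single u 1) (m v w)) := by
  conv_lhs => rw [hm_rec v w b c]
  rw [mExt_add_right m, mExt_add_right m]
  rw [qsLemB m br hm_rec (m v (w ++ [c])) a b u,
      qsLemB m br hm_rec (m (v ++ [b]) w) a c u,
      qsLemB m br hm_rec (m v w) a (br b c) u]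
  have key : Finsupp.mapDomain (· ++ [a])
        (mExt m (Finsupp.single u 1) (Finsupp.mapDomain (· ++ [b]) (m v (w ++ [c]))))
      + Finsupp.mapDomain (· ++ [a])
        (mExt m (Finsupp.single u 1) (Finsupp.mapDomain (· ++ [c]) (m (v ++ [b]) w)))
      + Finsupp.mapDomain (· ++ [a])
        (mExt m (Finsupp.single u 1) (Finsupp.mapDomain (· ++ [br b c]) (m v w)))
      = Finsupp.mapDomain (· ++ [a]) (mExt m (Finsupp.single u 1) (m (v ++ [b]) (w ++ [c]))) := by
    rw [← Finsupp.mapDomain_add, ← Finsupp.mapDomain_add,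
        ← mExt_add_right m, ← mExt_add_right m, ← hm_rec v w b c]
  rw [← key]
  abel

end QSAux

/-- **Associativity of the quasi-shuffle product.**
Let `K` be a field of characteristic zero and `A` an alphabet with a commutative, associative
bracket `br`.  Let `m` be the quasi-shuffle product on words, determined recursively by
`u * 1 = 1 * u = u` and `(ua) * (vb) = (u * vb)a + (ua * v)b + (u * v)[a,b]`.
Then for all words `u v w`, `(u * v) * w = u * (v * w)` (where the outer products are the
bilinear extension of `m` to `K⟨A⟩`). -/
theorem quasiShuffle_assoc {A : Type} [DecidableEq A] {K : Type} [Field K] [CharZero K]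
    (br : A → A → A)
    (hbr_comm : ∀ a b, br a b = br b a)
    (hbr_assoc : ∀ a b c, br (br a b) c = br a (br b c))
    (m : List A → List A → (List A →₀ K))
    (hm_right_unit : ∀ u, m u [] = Finsupp.single u 1)
    (hm_left_unit : ∀ v, m [] v = Finsupp.single v 1)
    (hm_rec : ∀ u v a b, m (u ++ [a]) (v ++ [b]) =
        Finsupp.mapDomain (· ++ [a]) (m u (v ++ [b]))
        + Finsupp.mapDomain (· ++ [b]) (m (u ++ [a]) v)
        + Finsupp.mapDomain (· ++ [br a b]) (m u v)) :
    ∀ u v w : List A,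
      mExt m (m u v) (Finsupp.single w 1) = mExt m (Finsupp.single u 1) (m v w) := by
  suffices H : ∀ n (u v w : List A), u.length + v.length + w.length = n →
      mExt m (m u v) (Finsupp.single w 1) = mExt m (Finsupp.single u 1) (m v w) by
    intro u v w
    exact H _ u v w rfl
  intro n
  induction n using Nat.strong_induction_on with
  | _ n ih =>
    intro u v w hn
    rcases List.eq_nil_or_concat w with rfl | ⟨w₁, c, hw⟩
    · rw [mExt_nil_right m hm_right_unit, hm_right_unit v, mExt_single_single]
      simp
    rcases List.eq_nil_or_concat v with rfl | ⟨v₁, b, hv⟩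
    · rw [hm_right_unit u, hm_left_unit w]
    rcases List.eq_nil_or_concat u with rfl | ⟨u₁, a, hu⟩
    · rw [hm_left_unit v, mExt_single_single, mExt_nil_left m hm_left_unit]
      simp
    rw [List.concat_eq_append] at hw hv hu
    subst hw hv hu
    simp only [List.length_append, List.length_cons, List.length_nil] at hn
    have h1 : mExt m (m u₁ (v₁ ++ [b])) (Finsupp.single (w₁ ++ [c]) 1)
        = mExt m (Finsupp.single u₁ 1) (m (v₁ ++ [b]) (w₁ ++ [c])) :=
      ih (u₁.length + (v₁ ++ [b]).length + (w₁ ++ [c]).length)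
        (by simp only [List.length_append, List.length_cons, List.length_nil]; omega) _ _ _ rfl
    have h2 : mExt m (m (u₁ ++ [a]) v₁) (Finsupp.single (w₁ ++ [c]) 1)
        = mExt m (Finsupp.single (u₁ ++ [a]) 1) (m v₁ (w₁ ++ [c])) :=
      ih ((u₁ ++ [a]).length + v₁.length + (w₁ ++ [c]).length)
        (by simp only [List.length_append, List.length_cons, List.length_nil]; omega) _ _ _ rfl
    have h3 : mExt m (m u₁ v₁) (Finsupp.single (w₁ ++ [c]) 1)
        = mExt m (Finsupp.single u₁ 1) (m v₁ (w₁ ++ [c])) :=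
      ih (u₁.length + v₁.length + (w₁ ++ [c]).length)
        (by simp only [List.length_append, List.length_cons, List.length_nil]; omega) _ _ _ rfl
    have h4 : mExt m (m (u₁ ++ [a]) (v₁ ++ [b])) (Finsupp.single w₁ 1)
        = mExt m (Finsupp.single (u₁ ++ [a]) 1) (m (v₁ ++ [b]) w₁) :=
      ih ((u₁ ++ [a]).length + (v₁ ++ [b]).length + w₁.length)
        (by simp only [List.length_append, List.length_cons, List.length_nil]; omega) _ _ _ rfl
    have h5 : mExt m (m u₁ (v₁ ++ [b])) (Finsupp.single w₁ 1)
        = mExt m (Finsupp.single u₁ 1) (m (v₁ ++ [b]) w₁) :=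
      ih (u₁.length + (v₁ ++ [b]).length + w₁.length)
        (by simp only [List.length_append, List.length_cons, List.length_nil]; omega) _ _ _ rfl
    have h6 : mExt m (m (u₁ ++ [a]) v₁) (Finsupp.single w₁ 1)
        = mExt m (Finsupp.single (u₁ ++ [a]) 1) (m v₁ w₁) :=
      ih ((u₁ ++ [a]).length + v₁.length + w₁.length)
        (by simp only [List.length_append, List.length_cons, List.length_nil]; omega) _ _ _ rfl
    have h7 : mExt m (m u₁ v₁) (Finsupp.single w₁ 1)
        = mExt m (Finsupp.single u₁ 1) (m v₁ w₁) :=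
      ih (u₁.length + v₁.length + w₁.length) (by omega) _ _ _ rfl
    rw [qsL7 m br hm_rec u₁ v₁ w₁ a b c, qsR7 m br hm_rec u₁ v₁ w₁ a b c,
        h1, h2, h3, h4, h5, h6, h7, hbr_assoc a b c]
    abel
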